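/- Let b(z) be the formal power series with b(z) = z + 2z³ b(z) b'(z), b(0)=0, and let b̲(z) be the formal power series determined by b̲(z) = z − 2z⁴ + 2z³ b̲(z) + 2z⁴ b̲'(z). Then for all n, [z^n] b̲(z) ≤ [z^n] b(z), and for n = 3k+1 one has [z^n] b(z) ≥ 6^{k+1} Γ(k + 2/3) / (12 Γ(2/3)). -/

import Mathlib

open PowerSeries Finset

noncomputable def psDeriv (b : PowerSeries ℝ) : PowerSeries ℝ :=
  PowerSeries.mk fun n => ((n + 1 : ℕ) : ℝ) * PowerSeries.coeff (n + 1) b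

theorem bridgeless_lower_bound (b lb : PowerSeries ℝ)
    (hode : b = PowerSeries.X + 2 * PowerSeries.X ^ 3 * b * psDeriv b)
    (h0 : PowerSeries.coeff 0 b = 0)
    (hlb : lb = PowerSeries.X - 2 * PowerSeries.X ^ 4 + 2 * PowerSeries.X ^ 3 * lb
        + 2 * PowerSeries.X ^ 4 * psDeriv lb) :
    (∀ n : ℕ, PowerSeries.coeff n lb ≤ PowerSeries.coeff n b) ∧
    (∀ k : ℕ, 6 ^ (k + 1) * Real.Gamma ((k : ℝ) + 2 / 3) / (12 * Real.Gamma (2 / 3))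
        ≤ PowerSeries.coeff (3 * k + 1) b) := by
  -- coefficient recurrence for b
  have hbrec : ∀ n : ℕ, coeff (n+3) b = 2 * ∑ p ∈ antidiagonal n,
      coeff p.1 b * (((p.2+1 : ℕ) : ℝ) * coeff (p.2+1) b) := by
    intro n
    conv_lhs => rw [hode]
    have h : (2 * X ^ 3 * b * psDeriv b : PowerSeries ℝ) = X ^ 3 * (2 * (b * psDeriv b)) := by
      ring
    rw [map_add, h, coeff_X_pow_mul, coeff_X, two_mul, map_add, coeff_mul]
    simp only [psDeriv, coeff_mk]
    push_cast
    ring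
  have hbsmall : ∀ m : ℕ, m < 3 → coeff m b = if m = 1 then 1 else 0 := by
    intro m hm
    conv_lhs => rw [hode]
    have h : (2 * X ^ 3 * b * psDeriv b : PowerSeries ℝ) = X ^ 3 * (2 * b * psDeriv b) := by
      ring
    rw [map_add, h, coeff_X_pow_mul', if_neg (by omega), coeff_X, add_zero]
  have hb1 : coeff 1 b = 1 := by simpa using hbsmall 1 (by norm_num)
  have hb2 : coeff 2 b = 0 := by simpa using hbsmall 2 (by norm_num)
  -- recurrence for lb
  have hlsmall : ∀ m : ℕ, m < 3 → coeff m lb = if m = 1 then 1 else 0 := by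
    intro m hm
    conv_lhs => rw [hlb]
    have h1 : (2 * X ^ 3 * lb : PowerSeries ℝ) = X ^ 3 * (2 * lb) := by ring
    have h2 : (2 * X ^ 4 * psDeriv lb : PowerSeries ℝ) = X ^ 4 * (2 * psDeriv lb) := by ring
    have h3 : (2 * X ^ 4 : PowerSeries ℝ) = X ^ 4 * 2 := by ring
    rw [map_add, map_add, map_sub, h1, h2, h3, coeff_X_pow_mul', coeff_X_pow_mul',
      coeff_X_pow_mul', if_neg (by omega), if_neg (by omega), if_neg (by omega), coeff_X]
    ring
  have hl0 : coeff 0 lb = 0 := by simpa using hlsmall 0 (by norm_num)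
  have hl1 : coeff 1 lb = 1 := by simpa using hlsmall 1 (by norm_num)
  have hl3 : coeff 3 lb = 0 := by
    conv_lhs => rw [hlb]
    have h1 : (2 * X ^ 3 * lb : PowerSeries ℝ) = X ^ 3 * (2 * lb) := by ring
    have h2 : (2 * X ^ 4 * psDeriv lb : PowerSeries ℝ) = X ^ 4 * (2 * psDeriv lb) := by ring
    have h3 : (2 * X ^ 4 : PowerSeries ℝ) = X ^ 4 * 2 := by ring
    rw [map_add, map_add, map_sub, h1, h2, h3, coeff_X_pow_mul', coeff_X_pow_mul',
      coeff_X_pow_mul', if_neg (by omega), if_pos (by omega), if_neg (by omega), coeff_X]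
    norm_num [two_mul]
    rwa [coeff_zero_eq_constantCoeff_apply] at hl0
  have hlrec : ∀ n : ℕ, coeff (n+4) lb
      = -(2*(if n = 0 then (1:ℝ) else 0)) + 2*((n:ℝ)+2) * coeff (n+1) lb := by
    intro n
    conv_lhs => rw [hlb]
    have h1 : (2 * X ^ 3 * lb : PowerSeries ℝ) = X ^ 3 * (2 * lb) := by ring
    have h2 : (2 * X ^ 4 * psDeriv lb : PowerSeries ℝ) = X ^ 4 * (2 * psDeriv lb) := by ring
    have h3 : (2 * X ^ 4 : PowerSeries ℝ) = X ^ 4 * (1+1) := by ring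
    rw [map_add, map_add, map_sub, h1, h2, h3, coeff_X_pow_mul', coeff_X_pow_mul',
      coeff_X_pow_mul', if_pos (by omega), if_pos (by omega), if_pos (by omega), coeff_X,
      show n+4-3 = n+1 from by omega, show n+4-4 = n from by omega,
      if_neg (by omega), two_mul, two_mul, map_add, map_add]
    simp only [psDeriv, coeff_mk, map_add, coeff_one]
    push_cast
    split_ifs <;> ring
  -- nonnegativity of coefficients of b
  have hbnn : ∀ n : ℕ, 0 ≤ coeff n b := by
    intro n
    induction n using Nat.strong_induction_on with
    | _ n ih =>
      rcases n with _ | _ | _ | m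
      · rw [h0]
      · rw [hb1]; norm_num
      · rw [hb2]
      · show 0 ≤ coeff (m+3) b
        rw [hbrec]
        have : ∀ p ∈ antidiagonal m,
            0 ≤ coeff p.1 b * (((p.2+1 : ℕ) : ℝ) * coeff (p.2+1) b) := by
          rintro ⟨i, j⟩ hp
          rw [HasAntidiagonal.mem_antidiagonal] at hp
          have hi : i < m + 3 := by omega
          have hj : j + 1 < m + 3 := by omega
          have := ih i hi
          have := ih (j+1) hj
          positivity
        have := Finset.sum_nonneg this
        positivity
  -- key extremal inequality
  have key : ∀ m : ℕ, 1 ≤ m → 2*((m:ℝ)+2) * coeff (m+1) b ≤ coeff (m+4) b := by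
    intro m hm
    have h4 : coeff (m+4) b = coeff ((m+1)+3) b := by norm_num
    rw [h4, hbrec]
    have hne : ((m+1,0) : ℕ×ℕ) ∉ ({(1,m)} : Finset (ℕ×ℕ)) := by
      simp only [Finset.mem_singleton, Prod.mk.injEq, not_and]
      intro h; omega
    have hsub : (insert (m+1,0) {(1,m)} : Finset (ℕ×ℕ)) ⊆ antidiagonal (m+1) := by
      intro p hp
      simp only [Finset.mem_insert, Finset.mem_singleton] at hp
      rcases hp with rfl | rfl <;> simp [HasAntidiagonal.mem_antidiagonal] <;> omega
    calc 2*((m:ℝ)+2) * coeff (m+1) b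
        = 2 * ∑ p ∈ (insert (m+1,0) {(1,m)} : Finset (ℕ×ℕ)),
            coeff p.1 b * (((p.2+1 : ℕ) : ℝ) * coeff (p.2+1) b) := by
          rw [Finset.sum_insert hne, Finset.sum_singleton]
          simp only [hb1]
          push_cast
          ring
      _ ≤ 2 * ∑ p ∈ antidiagonal (m+1),
            coeff p.1 b * (((p.2+1 : ℕ) : ℝ) * coeff (p.2+1) b) := by
          apply mul_le_mul_of_nonneg_left _ (by norm_num)
          apply Finset.sum_le_sum_of_subset_of_nonneg hsub
          rintro ⟨i, j⟩ _ _
          have := hbnn i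
          have := hbnn (j+1)
          positivity
  have hb4 : coeff 4 b = 2 := by
    have := hbrec 1
    rw [show (1:ℕ)+3 = 4 from rfl] at this
    rw [this, Finset.Nat.sum_antidiagonal_eq_sum_range_succ_mk]
    simp [Finset.sum_range_succ, h0, hb1, hb2]
  -- comparison
  have hcomp : ∀ n : ℕ, coeff n lb ≤ coeff n b := by
    intro n
    induction n using Nat.strong_induction_on with
    | _ n ih =>
      rcases n with _ | _ | _ | _ | m
      · rw [h0, hl0]
      · rw [hb1, hl1]
      · rw [hb2, hlsmall 2 (by norm_num)]; norm_num
      · rw [hl3]; exact hbnn 3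
      · show coeff (m+4) lb ≤ coeff (m+4) b
        rw [hlrec]
        rcases Nat.eq_zero_or_pos m with rfl | hm
        · rw [show (0:ℕ)+4 = 4 from rfl, hb4, if_pos rfl, hl1]
          push_cast
          norm_num
        · rw [if_neg (by omega)]
          have h1 : coeff (m+1) lb ≤ coeff (m+1) b := ih (m+1) (by omega)
          calc -(2*(0:ℝ)) + 2*((m:ℝ)+2) * coeff (m+1) lb
              ≤ 2*((m:ℝ)+2) * coeff (m+1) b := by
                have : (0:ℝ) ≤ 2*((m:ℝ)+2) := by positivity
                nlinarith
            _ ≤ coeff (m+4) b := key m hm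
  refine ⟨hcomp, ?_⟩
  -- lower bound for lb along 3k+1, via Gamma recurrence
  have hg : ∀ x : ℝ, 0 < x → Real.Gamma (x+1) = x * Real.Gamma x := fun x hx =>
    Real.Gamma_add_one (ne_of_gt hx)
  have hGpos : ∀ x : ℝ, 0 < x → 0 < Real.Gamma x := fun x hx => Real.Gamma_pos_of_pos hx
  have hgam : ∀ k : ℕ, (6:ℝ) ^ (k + 1) * Real.Gamma ((k : ℝ) + 2 / 3) / (12 * Real.Gamma (2 / 3))
      ≤ coeff (3 * k + 1) lb := by
    intro k
    induction k with
    | zero =>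
      simp only [Nat.cast_zero, zero_add, pow_one, Nat.mul_zero]
      rw [hl1]
      have h23 : (0:ℝ) < Real.Gamma (2/3) := hGpos _ (by norm_num)
      rw [div_le_one (by positivity)]
      nlinarith
    | succ k ihk =>
      have hrec := hlrec (3*k)
      rw [show 3*k+4 = 3*(k+1)+1 from by ring] at hrec
      have h23 : (0:ℝ) < Real.Gamma (2/3) := hGpos _ (by norm_num)
      have hgk : Real.Gamma (((k:ℝ)+1) + 2/3) = ((k:ℝ)+2/3) * Real.Gamma ((k:ℝ)+2/3) := by
        rw [show ((k:ℝ)+1) + 2/3 = ((k:ℝ)+2/3) + 1 from by ring, hg _ (by positivity)]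
      rcases Nat.eq_zero_or_pos k with rfl | hk
      · -- k = 0 : coeff 4 lb = 2 and bound is exactly 2
        rw [hrec]
        simp only [Nat.cast_zero, Nat.mul_zero, Nat.cast_one, if_pos rfl, hl1]
        push_cast
        have hG1 : Real.Gamma ((1:ℝ) + 2/3) = (2/3) * Real.Gamma (2/3) := by
          rw [show ((1:ℝ)+2/3) = 2/3 + 1 by ring, hg _ (by norm_num)]
        norm_num at hG1 ⊢
        rw [hG1, div_le_iff₀ (by positivity)]
        nlinarith [h23]
      · rw [hrec, if_neg (by omega)]
        have hck : (0:ℝ) ≤ 6 ^ (k + 1) * Real.Gamma ((k : ℝ) + 2 / 3) / (12 * Real.Gamma (2 / 3)) := by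
          have := hGpos ((k:ℝ)+2/3) (by positivity)
          positivity
        push_cast
        rw [hgk]
        calc (6:ℝ) ^ (k + 1 + 1) * (((k:ℝ)+2/3) * Real.Gamma ((k:ℝ)+2/3)) / (12 * Real.Gamma (2/3))
            = (6*((k:ℝ)+2/3)) * ((6:ℝ) ^ (k + 1) * Real.Gamma ((k:ℝ)+2/3) / (12 * Real.Gamma (2/3))) := by
              ring
          _ ≤ (2*(3*(k:ℝ)+2)) * coeff (3*k+1) lb := by
              have h64 : (6*((k:ℝ)+2/3)) = 2*(3*(k:ℝ)+2) := by ring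
              rw [h64]
              apply mul_le_mul_of_nonneg_left ihk (by positivity)
          _ = -(2*(0:ℝ)) + 2*((3*(k:ℝ))+2) * coeff (3*k+1) lb := by ring
  intro k
  exact le_trans (hgam k) (hcomp (3*k+1))
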